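/- Let G=(V,E) be a finite simple undirected graph with β_e > 1 for all e ∈ E and 0 < λ_v ≤ 1 for all v ∈ V, and let the weighted random cluster model have edge parameters q_e = 1 − 1/β_e and vertex weights λ. Then for every σ ∈ {0,1}^V and every S ⊆ E, π_Ising(σ) · P_{I→R}(σ, S) = π_wrc(S) · P_{R→I}(S, σ). -/

import Mathlib

open Finset
open scoped Classical

noncomputable section

variable {V : Type*} [Fintype V] [DecidableEq V]

/-- The vertex set of the connected component of `v` in the graph `(V, S)`. -/
def compOf (S : Finset (Sym2 V)) (v : V) : Finset V :=
  Finset.univ.filter fun u => (SimpleGraph.fromEdgeSet (↑S : Set (Sym2 V))).Reachable v u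

/-- `κ(V,S)`: the set of vertex sets of connected components of the graph `(V, S)`. -/
def kappa (S : Finset (Sym2 V)) : Finset (Finset V) :=
  Finset.univ.image (compOf S)

/-- `∏_{C ∈ κ(V,S)} (1 + ∏_{u ∈ C} λ_u)`. -/
def clusterProd (S : Finset (Sym2 V)) (lam : V → ℝ) : ℝ :=
  ∏ C ∈ kappa S, (1 + ∏ u ∈ C, lam u)

/-- Weight of an edge subset `S ⊆ E₀` in the weighted random cluster model. -/
def wtWRC (E₀ : Finset (Sym2 V)) (q : Sym2 V → ℝ) (lam : V → ℝ) (S : Finset (Sym2 V)) : ℝ :=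
  (∏ e ∈ S, q e) * (∏ f ∈ E₀ \ S, (1 - q f)) * clusterProd S lam

/-- Partition function of the weighted random cluster model. -/
def ZWRC (E₀ : Finset (Sym2 V)) (q : Sym2 V → ℝ) (lam : V → ℝ) : ℝ :=
  ∑ S ∈ E₀.powerset, wtWRC E₀ q lam S

/-- The weighted random cluster distribution. -/
def piWRC (E₀ : Finset (Sym2 V)) (q : Sym2 V → ℝ) (lam : V → ℝ) (S : Finset (Sym2 V)) : ℝ :=
  wtWRC E₀ q lam S / ZWRC E₀ q lam

/-- The monochromatic edges of a spin configuration `σ`. -/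
def monoEdges (E₀ : Finset (Sym2 V)) (σ : V → Bool) : Finset (Sym2 V) :=
  E₀.filter fun e => (e.map σ).IsDiag

/-- Weight of a spin configuration in the Ising model. -/
def wtIsing (E₀ : Finset (Sym2 V)) (β : Sym2 V → ℝ) (lam : V → ℝ) (σ : V → Bool) : ℝ :=
  (∏ e ∈ monoEdges E₀ σ, β e) * ∏ v : V, (if σ v then lam v else 1)

/-- Ising partition function. -/
def ZIsing (E₀ : Finset (Sym2 V)) (β : Sym2 V → ℝ) (lam : V → ℝ) : ℝ :=
  ∑ σ : V → Bool, wtIsing E₀ β lam σ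

/-- Ising Gibbs distribution. -/
def piIsing (E₀ : Finset (Sym2 V)) (β : Sym2 V → ℝ) (lam : V → ℝ) (σ : V → Bool) : ℝ :=
  wtIsing E₀ β lam σ / ZIsing E₀ β lam

/-- Vertices of odd degree in the graph `(V, S)`. -/
def oddVerts (S : Finset (Sym2 V)) : Finset V :=
  Finset.univ.filter fun v => Odd (S.filter fun e => v ∈ e).card

/-- Weight of an edge subset in the subgraph-world model. -/
def wtSG (E₀ : Finset (Sym2 V)) (p : Sym2 V → ℝ) (η : V → ℝ) (S : Finset (Sym2 V)) : ℝ :=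
  (∏ e ∈ S, p e) * (∏ f ∈ E₀ \ S, (1 - p f)) * ∏ v ∈ oddVerts S, η v

/-- Subgraph-world partition function. -/
def ZSG (E₀ : Finset (Sym2 V)) (p : Sym2 V → ℝ) (η : V → ℝ) : ℝ :=
  ∑ S ∈ E₀.powerset, wtSG E₀ p η S

/-- Subgraph-world distribution. -/
def piSG (E₀ : Finset (Sym2 V)) (p : Sym2 V → ℝ) (η : V → ℝ) (S : Finset (Sym2 V)) : ℝ :=
  wtSG E₀ p η S / ZSG E₀ p η

/-- The transformation `P_{I→R}` from Ising configurations to edge subsets. -/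
def PIR (E₀ : Finset (Sym2 V)) (β : Sym2 V → ℝ) (σ : V → Bool) (S : Finset (Sym2 V)) : ℝ :=
  if S ⊆ monoEdges E₀ σ then
    (∏ e ∈ S, (1 - (β e)⁻¹)) * ∏ f ∈ monoEdges E₀ σ \ S, (β f)⁻¹
  else 0

/-- The transformation `P_{R→I}` from edge subsets to Ising configurations. -/
def PRI (E₀ : Finset (Sym2 V)) (lam : V → ℝ) (S : Finset (Sym2 V)) (σ : V → Bool) : ℝ :=
  if S ⊆ monoEdges E₀ σ then
    ∏ C ∈ kappa S, ((∏ v ∈ C, if σ v then lam v else 1) / (1 + ∏ v ∈ C, lam v))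
  else 0

/-- Swendsen-Wang dynamics for the Ising model: `P_{I→R} ⬝ P_{R→I}`. -/
def PSWIsing (E₀ : Finset (Sym2 V)) (β : Sym2 V → ℝ) (lam : V → ℝ) (σ τ : V → Bool) : ℝ :=
  ∑ S ∈ E₀.powerset, PIR E₀ β σ S * PRI E₀ lam S τ

/-- Swendsen-Wang dynamics for the weighted random cluster model: `P_{R→I} ⬝ P_{I→R}`. -/
def PSWwrc (E₀ : Finset (Sym2 V)) (β : Sym2 V → ℝ) (lam : V → ℝ)
    (S S' : Finset (Sym2 V)) : ℝ :=
  ∑ σ : V → Bool, PRI E₀ lam S σ * PIR E₀ β σ S'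

/-- Lazy edge-flipping (Metropolis) dynamics for a distribution `pi` on subsets of `E₀`. -/
def PEF (E₀ : Finset (Sym2 V)) (pi : Finset (Sym2 V) → ℝ) (x y : Finset (Sym2 V)) : ℝ :=
  if x = y then
    1 - (1 / (2 * (E₀.card : ℝ))) * ∑ e ∈ E₀, min 1 (pi (symmDiff x {e}) / pi x)
  else if (symmDiff x y).card = 1 then
    (1 / (2 * (E₀.card : ℝ))) * min 1 (pi y / pi x)
  else 0

/-- Variance of `f` with respect to a distribution `pi` supported on `states`. -/
def varOn {α : Type*} (states : Finset α) (pi f : α → ℝ) : ℝ :=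
  (∑ x ∈ states, pi x * f x ^ 2) - (∑ x ∈ states, pi x * f x) ^ 2

/-- Dirichlet form of a Markov kernel `P` with stationary distribution `pi` on `states`. -/
def dirichletOn {α : Type*} (states : Finset α) (pi : α → ℝ) (P : α → α → ℝ) (f : α → ℝ) : ℝ :=
  ∑ x ∈ states, pi x * f x * (f x - ∑ y ∈ states, P x y * f y)

/-- Spectral gap of a reversible Markov kernel `P` with stationary distribution `pi`. -/
def gapOn {α : Type*} (states : Finset α) (pi : α → ℝ) (P : α → α → ℝ) : ℝ :=
  sInf ((fun f : α → ℝ => dirichletOn states pi P f / varOn states pi f) ''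
    {f | varOn states pi f ≠ 0})

/-- Total variation distance between two distributions on `states`. -/
def dTV {α : Type*} (states : Finset α) (μ ν : α → ℝ) : ℝ :=
  (1 / 2) * ∑ z ∈ states, |μ z - ν z|

/-- `t`-step transition probabilities of the Markov kernel `P` on state space `states`. -/
def kpow {α : Type*} (states : Finset α) (P : α → α → ℝ) : ℕ → α → α → ℝ
  | 0 => fun x y => if x = y then 1 else 0
  | (t + 1) => fun x y => ∑ z ∈ states, P x z * kpow states P t z y


/-! ### Auxiliary lemmas -/

private lemma mem_compOf' {S : Finset (Sym2 V)} {u v : V} :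
    u ∈ compOf S v ↔ (SimpleGraph.fromEdgeSet (↑S : Set (Sym2 V))).Reachable v u := by
  simp [compOf]

private lemma self_mem_compOf (S : Finset (Sym2 V)) (v : V) : v ∈ compOf S v :=
  mem_compOf'.mpr (SimpleGraph.Reachable.refl v)

private lemma compOf_eq_of_mem {S : Finset (Sym2 V)} {u v : V} (h : u ∈ compOf S v) :
    compOf S u = compOf S v := by
  rw [mem_compOf'] at h
  ext w
  simp only [mem_compOf']
  exact ⟨fun hw => h.trans hw, fun hw => h.symm.trans hw⟩

private lemma compOf_mem_kappa (S : Finset (Sym2 V)) (v : V) : compOf S v ∈ kappa S :=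
  Finset.mem_image_of_mem _ (Finset.mem_univ v)

private lemma kappa_rep {S : Finset (Sym2 V)} {C : Finset V} (hC : C ∈ kappa S) :
    ∃ w, compOf S w = C := by
  rw [kappa, Finset.mem_image] at hC
  obtain ⟨w, -, hw⟩ := hC
  exact ⟨w, hw⟩

private lemma compOf_eq_of_mem_kappa {S : Finset (Sym2 V)} {C : Finset V}
    (hC : C ∈ kappa S) {v : V} (hv : v ∈ C) : compOf S v = C := by
  obtain ⟨w, rfl⟩ := kappa_rep hC
  exact compOf_eq_of_mem hv

private lemma kappa_nonempty {S : Finset (Sym2 V)} {C : Finset V} (hC : C ∈ kappa S) :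
    ∃ w, w ∈ C := by
  obtain ⟨w, rfl⟩ := kappa_rep hC
  exact ⟨w, self_mem_compOf S w⟩

private lemma prod_kappa (S : Finset (Sym2 V)) (g : V → ℝ) :
    ∏ C ∈ kappa S, ∏ v ∈ C, g v = ∏ v, g v := by
  have hdisj : (↑(kappa S) : Set (Finset V)).PairwiseDisjoint (id : Finset V → Finset V) := by
    intro C hC D hD hne
    rw [Finset.mem_coe] at hC hD
    rw [Function.onFun, Finset.disjoint_left]
    intro u huC huD
    exact hne ((compOf_eq_of_mem_kappa hC huC).symm.trans (compOf_eq_of_mem_kappa hD huD))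
  have hcover : (kappa S).biUnion id = Finset.univ := by
    ext v
    simp only [Finset.mem_biUnion, id, Finset.mem_univ, iff_true]
    exact ⟨compOf S v, compOf_mem_kappa S v, self_mem_compOf S v⟩
  calc ∏ C ∈ kappa S, ∏ v ∈ C, g v = ∏ v ∈ (kappa S).biUnion id, g v :=
        (Finset.prod_biUnion hdisj).symm
    _ = ∏ v, g v := by rw [hcover]

private lemma spin_eq_of_reachable {E₀ S : Finset (Sym2 V)} {σ : V → Bool}
    (hS : S ⊆ monoEdges E₀ σ) {u v : V}
    (h : (SimpleGraph.fromEdgeSet (↑S : Set (Sym2 V))).Reachable u v) : σ u = σ v := by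
  obtain ⟨w⟩ := h
  induction w with
  | nil => rfl
  | cons hadj p ih =>
    rename_i a b c
    have h1 : s(a, b) ∈ S := by
      have := ((SimpleGraph.fromEdgeSet_adj _).mp hadj).1
      simpa using this
    have h2 := hS h1
    rw [monoEdges, Finset.mem_filter] at h2
    have h3 : σ a = σ b := by
      have := h2.2
      rw [Sym2.map_pair_eq] at this
      exact Sym2.isDiag_iff_proj_eq.mp this
    rw [h3]
    exact ih

private lemma const_on_comp {E₀ S : Finset (Sym2 V)} {σ : V → Bool}
    (hσ : S ⊆ monoEdges E₀ σ) {C : Finset V} (hC : C ∈ kappa S) {u v : V}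
    (hu : u ∈ C) (hv : v ∈ C) : σ u = σ v := by
  obtain ⟨w, rfl⟩ := kappa_rep hC
  rw [mem_compOf'] at hu hv
  exact (spin_eq_of_reachable hσ hu).symm.trans (spin_eq_of_reachable hσ hv)

private lemma sum_PIR (E₀ : Finset (Sym2 V)) (β : Sym2 V → ℝ) (σ : V → Bool) :
    ∑ S ∈ E₀.powerset, PIR E₀ β σ S = 1 := by
  have hsub : (monoEdges E₀ σ).powerset ⊆ E₀.powerset :=
    Finset.powerset_mono.mpr (Finset.filter_subset _ _)
  rw [← Finset.sum_subset hsub (by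
    intro S _ hS'
    rw [PIR, if_neg]
    intro h
    exact hS' (Finset.mem_powerset.mpr h))]
  have hcongr : ∀ S ∈ (monoEdges E₀ σ).powerset,
      PIR E₀ β σ S = (∏ e ∈ S, (1 - (β e)⁻¹)) * ∏ f ∈ monoEdges E₀ σ \ S, (β f)⁻¹ := by
    intro S hS
    rw [PIR, if_pos (Finset.mem_powerset.mp hS)]
  rw [Finset.sum_congr rfl hcongr, ← Finset.prod_add]
  simp

private lemma sum_PRI (E₀ : Finset (Sym2 V)) (lam : V → ℝ) (hlam : ∀ v, 0 < lam v)
    (S : Finset (Sym2 V)) (hSE : S ⊆ E₀) :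
    ∑ σ : V → Bool, PRI E₀ lam S σ = 1 := by
  have hΛ : ∀ C : Finset V, (0 : ℝ) < 1 + ∏ v ∈ C, lam v := by
    intro C
    have : (0 : ℝ) < ∏ v ∈ C, lam v := Finset.prod_pos fun v _ => hlam v
    linarith
  rw [← Finset.sum_filter_add_sum_filter_not Finset.univ
    (fun σ : V → Bool => S ⊆ monoEdges E₀ σ) (PRI E₀ lam S)]
  have h2 : ∑ σ ∈ Finset.univ.filter (fun σ : V → Bool => ¬ S ⊆ monoEdges E₀ σ),
      PRI E₀ lam S σ = 0 := by
    refine Finset.sum_eq_zero fun σ hσ => ?_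
    rw [PRI, if_neg (Finset.mem_filter.mp hσ).2]
  rw [h2, add_zero]
  rw [Finset.sum_nbij'
    (i := fun σ : V → Bool => (kappa S).filter fun C => ∀ v ∈ C, σ v = true)
    (j := fun T => fun v => if compOf S v ∈ T then true else false)
    (t := (kappa S).powerset)
    (g := fun T => (∏ C ∈ T, (∏ v ∈ C, lam v) / (1 + ∏ v ∈ C, lam v)) *
      ∏ C ∈ kappa S \ T, 1 / (1 + ∏ v ∈ C, lam v))]
  · rw [← Finset.prod_add]
    refine Finset.prod_eq_one fun C _ => ?_
    rw [← add_div, add_comm]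
    exact div_self (ne_of_gt (hΛ C))
  · intro σ _
    exact Finset.mem_powerset.mpr (Finset.filter_subset _ _)
  · -- j maps into the filter set
    intro T hT
    rw [Finset.mem_filter]
    refine ⟨Finset.mem_univ _, ?_⟩
    intro e he
    rw [monoEdges, Finset.mem_filter]
    refine ⟨hSE he, ?_⟩
    induction e using Sym2.ind with
    | _ a b =>
      rw [Sym2.map_pair_eq, Sym2.isDiag_iff_proj_eq]
      show (if compOf S a ∈ T then true else false) = (if compOf S b ∈ T then true else false)
      by_cases hab : a = b
      · rw [hab]
      · have hadj : (SimpleGraph.fromEdgeSet (↑S : Set (Sym2 V))).Adj a b :=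
          (SimpleGraph.fromEdgeSet_adj _).mpr ⟨by simpa using he, hab⟩
        have : b ∈ compOf S a := mem_compOf'.mpr hadj.reachable
        rw [compOf_eq_of_mem this]
  · -- left inverse
    intro σ hσ
    have hσ' : S ⊆ monoEdges E₀ σ := (Finset.mem_filter.mp hσ).2
    funext v
    have hmemk := compOf_mem_kappa S v
    have hvmem := self_mem_compOf S v
    show (if compOf S v ∈ (kappa S).filter (fun C => ∀ u ∈ C, σ u = true) then true else false)
      = σ v
    by_cases hv : σ v = true
    · rw [if_pos, hv]
      rw [Finset.mem_filter]
      exact ⟨hmemk, fun u hu => (const_on_comp hσ' hmemk hu hvmem).trans hv⟩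
    · have hv' : σ v = false := Bool.eq_false_iff.mpr hv
      have hnot : compOf S v ∉ (kappa S).filter (fun C => ∀ u ∈ C, σ u = true) := by
        rw [Finset.mem_filter]
        rintro ⟨-, hall⟩
        exact hv (hall v hvmem)
      rw [if_neg hnot, hv']
  · -- right inverse
    intro T hT
    have hTk : T ⊆ kappa S := Finset.mem_powerset.mp hT
    ext C
    rw [Finset.mem_filter]
    constructor
    · rintro ⟨hCk, hall⟩
      obtain ⟨w, hw⟩ := kappa_nonempty hCk
      have h5 : (if compOf S w ∈ T then true else false) = true := hall w hw
      rw [compOf_eq_of_mem_kappa hCk hw] at h5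
      by_cases hc : C ∈ T
      · exact hc
      · rw [if_neg hc] at h5
        exact absurd h5 (by simp)
    · intro hCT
      have hCk := hTk hCT
      refine ⟨hCk, fun v hv => ?_⟩
      show (if compOf S v ∈ T then true else false) = true
      rw [compOf_eq_of_mem_kappa hCk hv, if_pos hCT]
  · -- values agree
    intro σ hσ
    have hσ' : S ⊆ monoEdges E₀ σ := (Finset.mem_filter.mp hσ).2
    rw [PRI, if_pos hσ']
    rw [← Finset.prod_filter_mul_prod_filter_not (kappa S) (fun C => ∀ v ∈ C, σ v = true),
      Finset.filter_not]
    congr 1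
    · refine Finset.prod_congr rfl fun C hC => ?_
      rw [Finset.mem_filter] at hC
      congr 1
      exact Finset.prod_congr rfl fun v hv => by rw [hC.2 v hv, if_pos rfl]
    · refine Finset.prod_congr rfl fun C hC => ?_
      rw [Finset.mem_sdiff, Finset.mem_filter] at hC
      have hCk := hC.1
      have hnot : ¬ ∀ v ∈ C, σ v = true := fun h => hC.2 ⟨hCk, h⟩
      push_neg at hnot
      obtain ⟨w, hw, hwfalse'⟩ := hnot
      have hwfalse : σ w = false := Bool.eq_false_iff.mpr hwfalse'
      congr 1
      refine (Finset.prod_congr rfl fun v hv => ?_).trans Finset.prod_const_one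
      rw [const_on_comp hσ' hCk hv hw, hwfalse, if_neg (by simp)]

private lemma prod_cancel_aux {β : Sym2 V → ℝ} {S T : Finset (Sym2 V)} (hST : S ⊆ T)
    (hβ0 : ∀ e ∈ T, β e ≠ 0) :
    (∏ e ∈ T, β e) * ∏ f ∈ T \ S, (β f)⁻¹ = ∏ e ∈ S, β e := by
  rw [← Finset.prod_sdiff hST, mul_comm (∏ x ∈ T \ S, β x) (∏ x ∈ S, β x), mul_assoc,
    ← Finset.prod_mul_distrib,
    Finset.prod_congr rfl (fun f hf => mul_inv_cancel₀ (hβ0 f (Finset.mem_sdiff.mp hf).1)),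
    Finset.prod_const_one, mul_one]

private lemma key_identity (E₀ : Finset (Sym2 V)) (β : Sym2 V → ℝ) (lam : V → ℝ)
    (hβ : ∀ e ∈ E₀, 1 < β e) (hlam : ∀ v, 0 < lam v)
    (σ : V → Bool) (S : Finset (Sym2 V)) (hSE : S ⊆ E₀) :
    wtIsing E₀ β lam σ * PIR E₀ β σ S =
      (∏ e ∈ E₀, β e) * (wtWRC E₀ (fun e => 1 - (β e)⁻¹) lam S * PRI E₀ lam S σ) := by
  have hβ0 : ∀ e ∈ E₀, β e ≠ 0 := fun e he => ne_of_gt (lt_trans one_pos (hβ e he))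
  by_cases h : S ⊆ monoEdges E₀ σ
  · rw [PIR, if_pos h, PRI, if_pos h, wtIsing, wtWRC]
    have hcluster : clusterProd S lam *
        ∏ C ∈ kappa S, ((∏ v ∈ C, if σ v then lam v else 1) / (1 + ∏ v ∈ C, lam v)) =
        ∏ v, (if σ v then lam v else 1) := by
      rw [clusterProd, ← Finset.prod_mul_distrib,
        ← prod_kappa S (fun v => if σ v then lam v else 1)]
      refine Finset.prod_congr rfl fun C _ => ?_
      have hC : (0 : ℝ) < 1 + ∏ v ∈ C, lam v := by
        have : (0 : ℝ) < ∏ v ∈ C, lam v := Finset.prod_pos fun v _ => hlam v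
        linarith
      rw [mul_div_assoc', mul_comm, mul_div_assoc, div_self (ne_of_gt hC), mul_one]
    have hq : ∏ f ∈ E₀ \ S, (1 - (1 - (β f)⁻¹)) = ∏ f ∈ E₀ \ S, (β f)⁻¹ :=
      Finset.prod_congr rfl fun f _ => by ring
    have hM : (∏ e ∈ monoEdges E₀ σ, β e) * ∏ f ∈ monoEdges E₀ σ \ S, (β f)⁻¹ =
        ∏ e ∈ S, β e :=
      prod_cancel_aux h fun e he => hβ0 e (Finset.mem_of_mem_filter e he)
    have hE : (∏ e ∈ E₀, β e) * ∏ f ∈ E₀ \ S, (β f)⁻¹ = ∏ e ∈ S, β e :=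
      prod_cancel_aux hSE hβ0
    calc (∏ e ∈ monoEdges E₀ σ, β e) * (∏ v, if σ v then lam v else 1) *
          ((∏ e ∈ S, (1 - (β e)⁻¹)) * ∏ f ∈ monoEdges E₀ σ \ S, (β f)⁻¹)
        = ((∏ e ∈ monoEdges E₀ σ, β e) * ∏ f ∈ monoEdges E₀ σ \ S, (β f)⁻¹) *
          (∏ v, if σ v then lam v else 1) * ∏ e ∈ S, (1 - (β e)⁻¹) := by ring
      _ = (∏ e ∈ S, β e) * (∏ v, if σ v then lam v else 1) * ∏ e ∈ S, (1 - (β e)⁻¹) := by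
          rw [hM]
      _ = ((∏ e ∈ E₀, β e) * ∏ f ∈ E₀ \ S, (β f)⁻¹) *
          (∏ v, if σ v then lam v else 1) * ∏ e ∈ S, (1 - (β e)⁻¹) := by rw [hE]
      _ = (∏ e ∈ E₀, β e) * ((∏ e ∈ S, (1 - (β e)⁻¹)) * (∏ f ∈ E₀ \ S, (β f)⁻¹) *
          (clusterProd S lam *
            ∏ C ∈ kappa S, ((∏ v ∈ C, if σ v then lam v else 1) / (1 + ∏ v ∈ C, lam v)))) := by
          rw [hcluster]; ring
      _ = _ := by rw [hq]; ring
  · rw [PIR, if_neg h, PRI, if_neg h]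
    ring

private lemma Z_eq (E₀ : Finset (Sym2 V)) (β : Sym2 V → ℝ) (lam : V → ℝ)
    (hβ : ∀ e ∈ E₀, 1 < β e) (hlam : ∀ v, 0 < lam v) :
    ZIsing E₀ β lam = (∏ e ∈ E₀, β e) * ZWRC E₀ (fun e => 1 - (β e)⁻¹) lam := by
  calc ZIsing E₀ β lam = ∑ σ : V → Bool, wtIsing E₀ β lam σ * ∑ S ∈ E₀.powerset, PIR E₀ β σ S := by
        rw [ZIsing]
        exact Finset.sum_congr rfl fun σ _ => by rw [sum_PIR, mul_one]
    _ = ∑ σ : V → Bool, ∑ S ∈ E₀.powerset, wtIsing E₀ β lam σ * PIR E₀ β σ S := by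
        exact Finset.sum_congr rfl fun σ _ => Finset.mul_sum _ _ _
    _ = ∑ σ : V → Bool, ∑ S ∈ E₀.powerset, (∏ e ∈ E₀, β e) *
          (wtWRC E₀ (fun e => 1 - (β e)⁻¹) lam S * PRI E₀ lam S σ) := by
        refine Finset.sum_congr rfl fun σ _ => Finset.sum_congr rfl fun S hS => ?_
        exact key_identity E₀ β lam hβ hlam σ S (Finset.mem_powerset.mp hS)
    _ = (∏ e ∈ E₀, β e) * ∑ S ∈ E₀.powerset,
          wtWRC E₀ (fun e => 1 - (β e)⁻¹) lam S * ∑ σ : V → Bool, PRI E₀ lam S σ := by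
        rw [Finset.sum_comm, Finset.mul_sum]
        exact Finset.sum_congr rfl fun S _ => by rw [Finset.mul_sum, Finset.mul_sum]
    _ = (∏ e ∈ E₀, β e) * ZWRC E₀ (fun e => 1 - (β e)⁻¹) lam := by
        rw [ZWRC]
        congr 1
        refine Finset.sum_congr rfl fun S hS => ?_
        rw [sum_PRI E₀ lam hlam S (Finset.mem_powerset.mp hS), mul_one]

/-- Detailed-balance relation between `P_{I→R}` and `P_{R→I}`:
`π_Ising(σ)·P_{I→R}(σ,S) = π_wrc(S)·P_{R→I}(S,σ)` with `q_e = 1 − 1/β_e`. -/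
theorem pir_pri_balance {V : Type*} [Fintype V] [DecidableEq V]
    (G : SimpleGraph V) [DecidableRel G.Adj]
    (β : Sym2 V → ℝ) (lam : V → ℝ)
    (hβ : ∀ e ∈ G.edgeFinset, 1 < β e)
    (hlam : ∀ v : V, 0 < lam v ∧ lam v ≤ 1) :
    ∀ (σ : V → Bool), ∀ S ∈ G.edgeFinset.powerset,
      piIsing G.edgeFinset β lam σ * PIR G.edgeFinset β σ S =
        piWRC G.edgeFinset (fun e => 1 - (β e)⁻¹) lam S * PRI G.edgeFinset lam S σ := by
  intro σ S hS
  rw [Finset.mem_powerset] at hS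
  have hlam' : ∀ v, 0 < lam v := fun v => (hlam v).1
  have hβprod : (∏ e ∈ G.edgeFinset, β e) ≠ 0 :=
    Finset.prod_ne_zero_iff.mpr fun e he => ne_of_gt (lt_trans one_pos (hβ e he))
  rw [piIsing, piWRC, div_mul_eq_mul_div, div_mul_eq_mul_div,
    key_identity G.edgeFinset β lam hβ hlam' σ S hS,
    Z_eq G.edgeFinset β lam hβ hlam']
  exact mul_div_mul_left _ _ hβprod

end
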